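/- Let n >= 2 be an even integer and t a nonzero real number. The point (-t, 0) belongs to the real algebraic set Z_t = { (x,y) in R^2 : y^2 + (x - n*t)*(x + t)^n = 0 }, and (-t, 0) is an isolated point of Z_t if and only if t < 0. -/

import Mathlib

/-- In the real deformation `y² + (x - n t)(x + t)ⁿ = 0` of the `A_n` singularity
(`n` even), the point `(-t, 0)` lies on the real algebraic set, and it is an isolated
point of it if and only if `t < 0`. -/
theorem isolated_point_of_A_n_minus_one_deformation_iff
    (n : ℕ) (hn : 2 ≤ n) (hev : Even n) (t : ℝ) (ht : t ≠ 0) :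
    ((-t, (0 : ℝ)) ∈ {p : ℝ × ℝ | p.2 ^ 2 + (p.1 - n * t) * (p.1 + t) ^ n = 0}) ∧
    ((∃ ε > 0, ∀ q ∈ {p : ℝ × ℝ | p.2 ^ 2 + (p.1 - n * t) * (p.1 + t) ^ n = 0},
        dist q (-t, (0 : ℝ)) < ε → q = (-t, (0 : ℝ))) ↔ t < 0) := by
  have hn0 : n ≠ 0 := by omega
  constructor
  · show (0:ℝ) ^ 2 + (-t - n * t) * (-t + t) ^ n = 0
    have h : (-t + t : ℝ) = 0 := by ring
    rw [h, zero_pow hn0]; ring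
  constructor
  · -- isolated → t < 0
    rintro ⟨ε, hε, h⟩
    by_contra hlt
    have ht' : 0 < t := lt_of_le_of_ne (not_lt.mp hlt) (Ne.symm ht)
    set A : ℝ := (n + 1 : ℝ) * t with hA
    have hApos : 0 < A := by positivity
    set δ : ℝ := min (min 1 t) (min (ε / 2) (ε ^ 2 / (2 * A))) with hδdef
    have hδpos : 0 < δ := by
      apply lt_min (lt_min one_pos ht') (lt_min (by linarith) (by positivity))
    have hδ1 : δ ≤ 1 := le_trans (min_le_left _ _) (min_le_left _ _)
    have hδt : δ ≤ t := le_trans (min_le_left _ _) (min_le_right _ _)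
    have hδε : δ ≤ ε / 2 := le_trans (min_le_right _ _) (min_le_left _ _)
    have hδε2 : δ ≤ ε ^ 2 / (2 * A) := le_trans (min_le_right _ _) (min_le_right _ _)
    have hδA : δ ≤ A := by nlinarith [Nat.cast_nonneg (α := ℝ) n]
    set y : ℝ := Real.sqrt ((A - δ) * δ ^ n) with hy
    have hrad : 0 ≤ (A - δ) * δ ^ n := by
      apply mul_nonneg (by linarith) (by positivity)
    have hy2 : y ^ 2 = (A - δ) * δ ^ n := Real.sq_sqrt hrad
    have hynn : 0 ≤ y := Real.sqrt_nonneg _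
    set q : ℝ × ℝ := (-t + δ, y) with hq
    have hmem : q ∈ {p : ℝ × ℝ | p.2 ^ 2 + (p.1 - n * t) * (p.1 + t) ^ n = 0} := by
      show y ^ 2 + ((-t + δ) - n * t) * ((-t + δ) + t) ^ n = 0
      have h1 : ((-t + δ) + t : ℝ) = δ := by ring
      have h2 : ((-t + δ) - n * t : ℝ) = δ - A := by rw [hA]; ring
      rw [h1, h2, hy2]; ring
    have hδn : δ ^ n ≤ δ := pow_le_of_le_one hδpos.le hδ1 hn0
    have hy2lt : y ^ 2 < ε ^ 2 := by
      have h1 : y ^ 2 ≤ A * δ ^ n := by nlinarith [mul_nonneg hδpos.le (pow_nonneg hδpos.le n)]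
      have h2 : A * δ ^ n ≤ A * δ := by nlinarith
      have h3 : A * δ ≤ ε ^ 2 / 2 := by
        have := mul_le_mul_of_nonneg_left hδε2 hApos.le
        calc A * δ ≤ A * (ε ^ 2 / (2 * A)) := this
          _ = ε ^ 2 / 2 := by field_simp
      nlinarith
    have hylt : y < ε := by nlinarith [sq_nonneg (y - ε)]
    have hdist : dist q (-t, (0 : ℝ)) < ε := by
      rw [Prod.dist_eq]
      apply max_lt
      · show dist (-t + δ) (-t) < ε
        rw [Real.dist_eq]
        rw [abs_of_nonneg (by linarith : (0:ℝ) ≤ -t + δ - -t)]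
        linarith
      · show dist y 0 < ε
        rw [Real.dist_eq, sub_zero, abs_of_nonneg hynn]
        exact hylt
    have := h q hmem hdist
    have : q.1 = -t := congrArg Prod.fst this
    simp only [hq] at this
    linarith
  · -- t < 0 → isolated
    intro htneg
    refine ⟨(n + 1 : ℝ) * (-t), mul_pos (by positivity) (by linarith), ?_⟩
    rintro ⟨x, y⟩ hmem hdist
    simp only [Set.mem_setOf_eq] at hmem
    rw [Prod.dist_eq] at hdist
    have h1 : dist x (-t) < (n + 1 : ℝ) * (-t) := (max_lt_iff.mp hdist).1
    rw [Real.dist_eq] at h1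
    have h1' := abs_lt.mp h1
    have hpos : 0 < x - n * t := by
      have : x + t > (n + 1 : ℝ) * t := by nlinarith [h1'.1]
      nlinarith
    have hpow : 0 ≤ (x + t) ^ n := hev.pow_nonneg _
    have hy2 : y ^ 2 = 0 ∧ (x - n * t) * (x + t) ^ n = 0 := by
      constructor <;> nlinarith [sq_nonneg y, mul_nonneg hpos.le hpow]
    have hy0 : y = 0 := by nlinarith [hy2.1]
    have hx : (x + t) ^ n = 0 := by
      rcases mul_eq_zero.mp hy2.2 with h | h
      · linarith
      · exact h
    have hx0 : x = -t := by
      have := pow_eq_zero_iff hn0 |>.mp hx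
      linarith
    simp [hx0, hy0]
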